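/- A family of qubit Pauli channels {E_p⃗ : p⃗ ∈ 𝔐} can be masked by an isometry if and only if there exists k ∈ {x, y, z} and a constant c ∈ [0,1] such that p₀ + p_k = c for all p⃗ ∈ 𝔐. -/
import Mathlib


open Matrix
open scoped ComplexOrder

noncomputable section

/-- Partial trace over the first (A) factor. -/
def ptA {dA dB : ℕ} (M : Matrix (Fin dA × Fin dB) (Fin dA × Fin dB) ℂ) :
    Matrix (Fin dB) (Fin dB) ℂ :=
  fun i j => ∑ k, M (k, i) (k, j)

/-- Partial trace over the second (B) factor. -/
def ptB {dA dB : ℕ} (M : Matrix (Fin dA × Fin dB) (Fin dA × Fin dB) ℂ) :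
    Matrix (Fin dA) (Fin dA) ℂ :=
  fun i j => ∑ k, M (i, k) (j, k)

def σx : Matrix (Fin 2) (Fin 2) ℂ := !![0, 1; 1, 0]
def σy : Matrix (Fin 2) (Fin 2) ℂ := !![0, -Complex.I; Complex.I, 0]
def σz : Matrix (Fin 2) (Fin 2) ℂ := !![1, 0; 0, -1]

def pauli : Fin 4 → Matrix (Fin 2) (Fin 2) ℂ := ![1, σx, σy, σz]

/-- The Pauli channel with probability four-vector `p`. -/
def pauliChannel (p : Fin 4 → ℝ) (ρ : Matrix (Fin 2) (Fin 2) ℂ) :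
    Matrix (Fin 2) (Fin 2) ℂ :=
  ∑ i, ((p i : ℝ) : ℂ) • (pauli i * ρ * (pauli i)ᴴ)

-- ===================== auxiliary lemmas =====================

lemma ptA_add {dA dB : ℕ} (X Y : Matrix (Fin dA × Fin dB) (Fin dA × Fin dB) ℂ) :
    ptA (X + Y) = ptA X + ptA Y := by
  ext i j; simp [ptA, Finset.sum_add_distrib]

lemma ptA_smul {dA dB : ℕ} (c : ℂ) (X : Matrix (Fin dA × Fin dB) (Fin dA × Fin dB) ℂ) :
    ptA (c • X) = c • ptA X := by
  ext i j; simp [ptA, Finset.mul_sum]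

lemma ptA_sub {dA dB : ℕ} (X Y : Matrix (Fin dA × Fin dB) (Fin dA × Fin dB) ℂ) :
    ptA (X - Y) = ptA X - ptA Y := by
  ext i j; simp [ptA, Finset.sum_sub_distrib]

lemma ptB_add {dA dB : ℕ} (X Y : Matrix (Fin dA × Fin dB) (Fin dA × Fin dB) ℂ) :
    ptB (X + Y) = ptB X + ptB Y := by
  ext i j; simp [ptB, Finset.sum_add_distrib]

lemma ptB_smul {dA dB : ℕ} (c : ℂ) (X : Matrix (Fin dA × Fin dB) (Fin dA × Fin dB) ℂ) :
    ptB (c • X) = c • ptB X := by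
  ext i j; simp [ptB, Finset.mul_sum]

lemma ptB_sub {dA dB : ℕ} (X Y : Matrix (Fin dA × Fin dB) (Fin dA × Fin dB) ℂ) :
    ptB (X - Y) = ptB X - ptB Y := by
  ext i j; simp [ptB, Finset.sum_sub_distrib]

lemma decomp (p q : Fin 4 → ℝ) (hp : ∑ i, p i = 1) (hq : ∑ i, q i = 1)
    (ρ : Matrix (Fin 2) (Fin 2) ℂ) :
    pauliChannel p ρ - pauliChannel q ρ =
      ((↑(p 0 + p 1) - ↑(q 0 + q 1) : ℂ) * (ρ 0 1 + ρ 1 0)) • σx +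
      ((↑(p 0 + p 2) - ↑(q 0 + q 2) : ℂ) * (Complex.I * (ρ 0 1 - ρ 1 0))) • σy +
      ((↑(p 0 + p 3) - ↑(q 0 + q 3) : ℂ) * (ρ 0 0 - ρ 1 1)) • σz := by
  have hp0 : (↑(p 0) : ℂ) = 1 - ↑(p 1) - ↑(p 2) - ↑(p 3) := by
    rw [Fin.sum_univ_four] at hp
    have h := congrArg (Complex.ofReal) hp; push_cast at h; linear_combination h
  have hq0 : (↑(q 0) : ℂ) = 1 - ↑(q 1) - ↑(q 2) - ↑(q 3) := by
    rw [Fin.sum_univ_four] at hq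
    have h := congrArg (Complex.ofReal) hq; push_cast at h; linear_combination h
  ext i j
  fin_cases i <;> fin_cases j <;>
    simp [pauliChannel, Fin.sum_univ_four, pauli, σx, σy, σz, Matrix.mul_apply,
      Matrix.sub_apply, Matrix.add_apply, Matrix.smul_apply, Matrix.conjTranspose_apply,
      Fin.sum_univ_two, Matrix.vecMul, dotProduct, Matrix.vecHead, Matrix.vecTail] <;>
    rw [hp0, hq0] <;> ring_nf <;> simp only [Complex.I_sq] <;> ring

lemma E01_decomp : (!![(0:ℂ),1;0,0]) = (2⁻¹:ℂ) • σx + (2⁻¹ * Complex.I) • σy := by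
  ext i j
  fin_cases i <;> fin_cases j <;>
    simp [σx, σy] <;> ring_nf <;> simp [Complex.I_sq] <;> ring

lemma no_masking {dA dB : ℕ} (M : Matrix (Fin dA × Fin dB) (Fin 2) ℂ)
    (hM : Mᴴ * M = 1)
    (hx1 : ptA (M * σx * Mᴴ) = 0)
    (hy1 : ptA (M * σy * Mᴴ) = 0)
    (hz2 : ptB (M * σz * Mᴴ) = 0) : False := by
  set U : Matrix (Fin dA) (Fin dB) ℂ := Matrix.of fun a b => M (a,b) 0 with hU
  set V : Matrix (Fin dA) (Fin dB) ℂ := Matrix.of fun a b => M (a,b) 1 with hV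
  have hUUVV : U * Uᴴ - V * Vᴴ = ptB (M * σz * Mᴴ) := by
    ext a a'
    simp only [ptB, Matrix.sub_apply, Matrix.mul_apply, Matrix.conjTranspose_apply,
      ← Finset.sum_sub_distrib]
    apply Finset.sum_congr rfl
    intro b _
    simp [σz, Fin.sum_univ_two, hU, hV, Matrix.mul_apply, Matrix.conjTranspose_apply]
    ring
  have hcA : ptA (M * !![(0:ℂ),1;0,0] * Mᴴ) = 0 := by
    rw [E01_decomp]
    simp only [Matrix.mul_add, Matrix.add_mul, Matrix.mul_smul, Matrix.smul_mul,
      ptA_add, ptA_smul, hx1, hy1, smul_zero, add_zero]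
  have hUV : Uᴴ * V = 0 := by
    ext i j
    have h := congrFun (congrFun hcA i) j
    simp only [ptA, Matrix.zero_apply] at h
    have h' := congrArg (starRingEnd ℂ) h
    simp only [map_sum, _root_.map_mul, map_zero, Complex.conj_conj] at h'
    rw [Matrix.mul_apply]
    rw [show (0 : Matrix (Fin dB) (Fin dB) ℂ) i j = 0 from rfl]
    rw [← h']
    apply Finset.sum_congr rfl
    intro a _
    simp [hU, hV, Matrix.conjTranspose_apply, Matrix.mul_apply, Fin.sum_univ_two]
    try ring
  have hW : U * Uᴴ = V * Vᴴ := by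
    have := hUUVV
    rw [hz2] at this
    linear_combination (norm := skip) this
    abel
  have hWW : (U * Uᴴ) * (U * Uᴴ) = 0 := by
    nth_rewrite 2 [hW]
    rw [Matrix.mul_assoc, ← Matrix.mul_assoc Uᴴ V, hUV]
    simp
  have hWzero : U * Uᴴ = 0 := by
    have h1 : (U * Uᴴ)ᴴ * (U * Uᴴ) = 0 := by
      rw [Matrix.conjTranspose_mul, Matrix.conjTranspose_conjTranspose]
      exact hWW
    exact Matrix.conjTranspose_mul_self_eq_zero.mp h1
  have htr : (U * Uᴴ).trace = 1 := by
    have h := congrFun (congrFun hM 0) 0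
    simp only [Matrix.mul_apply, Matrix.conjTranspose_apply, Matrix.one_apply_eq] at h
    rw [Matrix.trace]
    rw [← h]
    rw [Fintype.sum_prod_type]
    apply Finset.sum_congr rfl
    intro a _
    simp [Matrix.diag, Matrix.mul_apply, hU, Matrix.conjTranspose_apply]
    apply Finset.sum_congr rfl
    intro b _
    ring
  rw [hWzero] at htr
  simp at htr

-- ===================== eigenstates =====================

def s2 : ℝ := (Real.sqrt 2)⁻¹

lemma hs2 : (s2 : ℂ) * s2 = 2⁻¹ := by
  rw [← Complex.ofReal_mul]
  have : s2 * s2 = 2⁻¹ := by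
    rw [s2, ← mul_inv, Real.mul_self_sqrt (by norm_num)]
  rw [this]
  norm_num

lemma hs2sq : (s2 : ℂ) ^ 2 = 2⁻¹ := by rw [sq]; exact hs2

lemma I3 : Complex.I ^ 3 = -Complex.I := by
  rw [pow_succ, sq, Complex.I_mul_I]; ring

def ρ1 : Matrix (Fin 2) (Fin 2) ℂ := !![1/2, 1/2; 1/2, 1/2]
def ρ2 : Matrix (Fin 2) (Fin 2) ℂ := !![1/2, -Complex.I/2; Complex.I/2, 1/2]
def ρ3 : Matrix (Fin 2) (Fin 2) ℂ := !![1, 0; 0, 0]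

lemma ρ1_psd : ρ1.PosSemidef := by
  have h : ρ1 = (!![(s2:ℂ), s2] : Matrix (Fin 1) (Fin 2) ℂ)ᴴ * !![(s2:ℂ), s2] := by
    ext i j
    fin_cases i <;> fin_cases j <;>
      simp [ρ1, Matrix.mul_apply, Matrix.conjTranspose_apply, Complex.conj_ofReal] <;>
      linear_combination (-1:ℂ) * hs2
  rw [h]; exact Matrix.posSemidef_conjTranspose_mul_self _

lemma ρ2_psd : ρ2.PosSemidef := by
  have h : ρ2 = (!![(s2:ℂ), -Complex.I * s2] : Matrix (Fin 1) (Fin 2) ℂ)ᴴ *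
      !![(s2:ℂ), -Complex.I * s2] := by
    ext i j
    fin_cases i <;> fin_cases j <;>
      simp [ρ2, Matrix.mul_apply, Matrix.conjTranspose_apply, Complex.conj_ofReal,
        Complex.conj_I] <;>
      ring_nf <;> simp only [Complex.I_sq, I3, hs2sq] <;> try ring
  rw [h]; exact Matrix.posSemidef_conjTranspose_mul_self _

lemma ρ3_psd : ρ3.PosSemidef := by
  have h : ρ3 = (!![(1:ℂ), 0] : Matrix (Fin 1) (Fin 2) ℂ)ᴴ * !![(1:ℂ), 0] := by
    ext i j
    fin_cases i <;> fin_cases j <;>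
      simp [ρ3, Matrix.mul_apply, Matrix.conjTranspose_apply]
  rw [h]; exact Matrix.posSemidef_conjTranspose_mul_self _

lemma ρ1_tr : ρ1.trace = 1 := by simp [ρ1, Matrix.trace, Fin.sum_univ_two]; norm_num
lemma ρ2_tr : ρ2.trace = 1 := by simp [ρ2, Matrix.trace, Fin.sum_univ_two]; norm_num
lemma ρ3_tr : ρ3.trace = 1 := by simp [ρ3, Matrix.trace, Fin.sum_univ_two]

lemma diff1 (p q : Fin 4 → ℝ) (hp : ∑ i, p i = 1) (hq : ∑ i, q i = 1) :
    pauliChannel p ρ1 - pauliChannel q ρ1 = ((↑(p 0 + p 1) - ↑(q 0 + q 1) : ℂ)) • σx := by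
  rw [decomp p q hp hq]
  ext i j
  fin_cases i <;> fin_cases j <;>
    simp [ρ1, σx, σy, σz] <;> ring_nf <;> try simp only [Complex.I_sq, I3] <;> try ring

lemma diff2 (p q : Fin 4 → ℝ) (hp : ∑ i, p i = 1) (hq : ∑ i, q i = 1) :
    pauliChannel p ρ2 - pauliChannel q ρ2 = ((↑(p 0 + p 2) - ↑(q 0 + q 2) : ℂ)) • σy := by
  rw [decomp p q hp hq]
  ext i j
  fin_cases i <;> fin_cases j <;>
    simp [ρ2, σx, σy, σz] <;> ring_nf <;> try simp only [Complex.I_sq, I3] <;> try ring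

lemma diff3 (p q : Fin 4 → ℝ) (hp : ∑ i, p i = 1) (hq : ∑ i, q i = 1) :
    pauliChannel p ρ3 - pauliChannel q ρ3 = ((↑(p 0 + p 3) - ↑(q 0 + q 3) : ℂ)) • σz := by
  rw [decomp p q hp hq]
  ext i j
  fin_cases i <;> fin_cases j <;>
    simp [ρ3, σx, σy, σz] <;> ring_nf <;> try simp only [Complex.I_sq, I3] <;> try ring

lemma get_zero {dA dB : ℕ} (M : Matrix (Fin dA × Fin dB) (Fin 2) ℂ)
    (S : Matrix (Fin 2) (Fin 2) ℂ) (d : ℂ) (hd : d ≠ 0)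
    (X Y : Matrix (Fin 2) (Fin 2) ℂ)
    (hXY : X - Y = d • S)
    (h1 : ptA (M * X * Mᴴ) = ptA (M * Y * Mᴴ))
    (h2 : ptB (M * X * Mᴴ) = ptB (M * Y * Mᴴ)) :
    ptA (M * S * Mᴴ) = 0 ∧ ptB (M * S * Mᴴ) = 0 := by
  constructor
  · have h : ptA (M * (X - Y) * Mᴴ) = 0 := by
      rw [Matrix.mul_sub, Matrix.sub_mul, ptA_sub, h1, sub_self]
    rw [hXY, Matrix.mul_smul, Matrix.smul_mul, ptA_smul] at h
    exact (smul_eq_zero.mp h).resolve_left hd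
  · have h : ptB (M * (X - Y) * Mᴴ) = 0 := by
      rw [Matrix.mul_sub, Matrix.sub_mul, ptB_sub, h2, sub_self]
    rw [hXY, Matrix.mul_smul, Matrix.smul_mul, ptB_smul] at h
    exact (smul_eq_zero.mp h).resolve_left hd

-- ===================== maskers =====================

def Mz : Matrix (Fin 2 × Fin 2) (Fin 2) ℂ :=
  Matrix.of fun ab j => if ab.1 = j ∧ ab.2 = j then 1 else 0

def Mx : Matrix (Fin 2 × Fin 2) (Fin 2) ℂ :=
  Matrix.of fun ab j =>
    if ab = (0,0) then (s2:ℂ) else if ab = (1,1) then (if j = 0 then (s2:ℂ) else -(s2:ℂ)) else 0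

def My : Matrix (Fin 2 × Fin 2) (Fin 2) ℂ :=
  Matrix.of fun ab j =>
    if ab = (0,0) then (if j = 0 then (s2:ℂ) else -Complex.I * s2)
    else if ab = (1,1) then (if j = 0 then (s2:ℂ) else Complex.I * s2) else 0

lemma Mz_iso : Mzᴴ * Mz = 1 := by
  ext i j
  fin_cases i <;> fin_cases j <;>
    simp [Mz, Matrix.mul_apply, Fintype.sum_prod_type, Fin.sum_univ_two,
      Matrix.conjTranspose_apply, Matrix.one_apply]

lemma Mx_iso : Mxᴴ * Mx = 1 := by
  ext i j
  fin_cases i <;> fin_cases j <;>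
    simp [Mx, Matrix.mul_apply, Fintype.sum_prod_type, Fin.sum_univ_two,
      Matrix.conjTranspose_apply, Matrix.one_apply, Complex.conj_ofReal] <;>
    ring_nf <;> simp only [Complex.I_sq, I3, hs2sq] <;> norm_num

lemma My_iso : Myᴴ * My = 1 := by
  ext i j
  fin_cases i <;> fin_cases j <;>
    simp [My, Matrix.mul_apply, Fintype.sum_prod_type, Fin.sum_univ_two,
      Matrix.conjTranspose_apply, Matrix.one_apply, Complex.conj_ofReal, Complex.conj_I] <;>
    ring_nf <;> simp only [Complex.I_sq, I3, hs2sq] <;> norm_num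

lemma Mz_x1 : ptA (Mz * σx * Mzᴴ) = 0 := by
  ext i j
  fin_cases i <;> fin_cases j <;>
    simp [ptA, Mz, σx, Matrix.mul_apply, Fin.sum_univ_two, Matrix.conjTranspose_apply]

lemma Mz_x2 : ptB (Mz * σx * Mzᴴ) = 0 := by
  ext i j
  fin_cases i <;> fin_cases j <;>
    simp [ptB, Mz, σx, Matrix.mul_apply, Fin.sum_univ_two, Matrix.conjTranspose_apply]

lemma Mz_y1 : ptA (Mz * σy * Mzᴴ) = 0 := by
  ext i j
  fin_cases i <;> fin_cases j <;>
    simp [ptA, Mz, σy, Matrix.mul_apply, Fin.sum_univ_two, Matrix.conjTranspose_apply]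

lemma Mz_y2 : ptB (Mz * σy * Mzᴴ) = 0 := by
  ext i j
  fin_cases i <;> fin_cases j <;>
    simp [ptB, Mz, σy, Matrix.mul_apply, Fin.sum_univ_two, Matrix.conjTranspose_apply]

lemma Mx_y1 : ptA (Mx * σy * Mxᴴ) = 0 := by
  ext i j
  fin_cases i <;> fin_cases j <;>
    simp [ptA, Mx, σy, Matrix.mul_apply, Fin.sum_univ_two, Matrix.conjTranspose_apply,
      Complex.conj_ofReal] <;> ring

lemma Mx_y2 : ptB (Mx * σy * Mxᴴ) = 0 := by
  ext i j
  fin_cases i <;> fin_cases j <;>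
    simp [ptB, Mx, σy, Matrix.mul_apply, Fin.sum_univ_two, Matrix.conjTranspose_apply,
      Complex.conj_ofReal] <;> ring

lemma Mx_z1 : ptA (Mx * σz * Mxᴴ) = 0 := by
  ext i j
  fin_cases i <;> fin_cases j <;>
    simp [ptA, Mx, σz, Matrix.mul_apply, Fin.sum_univ_two, Matrix.conjTranspose_apply,
      Complex.conj_ofReal] <;> ring

lemma Mx_z2 : ptB (Mx * σz * Mxᴴ) = 0 := by
  ext i j
  fin_cases i <;> fin_cases j <;>
    simp [ptB, Mx, σz, Matrix.mul_apply, Fin.sum_univ_two, Matrix.conjTranspose_apply,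
      Complex.conj_ofReal] <;> ring

lemma My_x1 : ptA (My * σx * Myᴴ) = 0 := by
  ext i j
  fin_cases i <;> fin_cases j <;>
    simp [ptA, My, σx, Matrix.mul_apply, Fin.sum_univ_two, Matrix.conjTranspose_apply,
      Complex.conj_ofReal, Complex.conj_I] <;> ring_nf <;> simp only [Complex.I_sq, I3] <;> try ring_nf <;> simp only [Complex.I_sq, I3] <;> try ring

lemma My_x2 : ptB (My * σx * Myᴴ) = 0 := by
  ext i j
  fin_cases i <;> fin_cases j <;>
    simp [ptB, My, σx, Matrix.mul_apply, Fin.sum_univ_two, Matrix.conjTranspose_apply,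
      Complex.conj_ofReal, Complex.conj_I] <;> ring_nf <;> simp only [Complex.I_sq, I3] <;> try ring_nf <;> simp only [Complex.I_sq, I3] <;> try ring

lemma My_z1 : ptA (My * σz * Myᴴ) = 0 := by
  ext i j
  fin_cases i <;> fin_cases j <;>
    simp [ptA, My, σz, Matrix.mul_apply, Fin.sum_univ_two, Matrix.conjTranspose_apply,
      Complex.conj_ofReal, Complex.conj_I] <;> ring_nf <;> simp only [Complex.I_sq, I3] <;> try ring_nf <;> simp only [Complex.I_sq, I3] <;> try ring

lemma My_z2 : ptB (My * σz * Myᴴ) = 0 := by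
  ext i j
  fin_cases i <;> fin_cases j <;>
    simp [ptB, My, σz, Matrix.mul_apply, Fin.sum_univ_two, Matrix.conjTranspose_apply,
      Complex.conj_ofReal, Complex.conj_I] <;> ring_nf <;> simp only [Complex.I_sq, I3] <;> try ring

-- ===================== masking glue =====================

lemma mask_outA {dA dB : ℕ} (M : Matrix (Fin dA × Fin dB) (Fin 2) ℂ)
    (X Y : Matrix (Fin 2) (Fin 2) ℂ) (cx cy cz : ℂ)
    (hXY : X - Y = cx • σx + cy • σy + cz • σz)
    (hx : cx • ptA (M * σx * Mᴴ) = 0) (hy : cy • ptA (M * σy * Mᴴ) = 0)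
    (hz : cz • ptA (M * σz * Mᴴ) = 0) :
    ptA (M * X * Mᴴ) = ptA (M * Y * Mᴴ) := by
  have h : ptA (M * (X - Y) * Mᴴ) = 0 := by
    rw [hXY]
    simp only [Matrix.mul_add, Matrix.add_mul, Matrix.mul_smul, Matrix.smul_mul,
      ptA_add, ptA_smul, hx, hy, hz, add_zero, zero_add]
  rw [Matrix.mul_sub, Matrix.sub_mul, ptA_sub] at h
  exact sub_eq_zero.mp h

lemma mask_outB {dA dB : ℕ} (M : Matrix (Fin dA × Fin dB) (Fin 2) ℂ)
    (X Y : Matrix (Fin 2) (Fin 2) ℂ) (cx cy cz : ℂ)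
    (hXY : X - Y = cx • σx + cy • σy + cz • σz)
    (hx : cx • ptB (M * σx * Mᴴ) = 0) (hy : cy • ptB (M * σy * Mᴴ) = 0)
    (hz : cz • ptB (M * σz * Mᴴ) = 0) :
    ptB (M * X * Mᴴ) = ptB (M * Y * Mᴴ) := by
  have h : ptB (M * (X - Y) * Mᴴ) = 0 := by
    rw [hXY]
    simp only [Matrix.mul_add, Matrix.add_mul, Matrix.mul_smul, Matrix.smul_mul,
      ptB_add, ptB_smul, hx, hy, hz, add_zero, zero_add]
  rw [Matrix.mul_sub, Matrix.sub_mul, ptB_sub] at h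
  exact sub_eq_zero.mp h

-- ===================== main theorem =====================

theorem stmt8 (𝔐 : Set (Fin 4 → ℝ))
    (hprob : ∀ p ∈ 𝔐, (∀ i, 0 ≤ p i) ∧ ∑ i, p i = 1) :
    (∃ (dA dB : ℕ) (M : Matrix (Fin dA × Fin dB) (Fin 2) ℂ),
      Mᴴ * M = 1 ∧
      ∀ ρ : Matrix (Fin 2) (Fin 2) ℂ, ρ.PosSemidef → ρ.trace = 1 →
        ∀ p ∈ 𝔐, ∀ q ∈ 𝔐,
          ptA (M * pauliChannel p ρ * Mᴴ) = ptA (M * pauliChannel q ρ * Mᴴ) ∧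
          ptB (M * pauliChannel p ρ * Mᴴ) = ptB (M * pauliChannel q ρ * Mᴴ)) ↔
    (∃ (k : Fin 3) (c : ℝ), 0 ≤ c ∧ c ≤ 1 ∧ ∀ p ∈ 𝔐, p 0 + p k.succ = c) := by
  constructor
  · rintro ⟨dA, dB, M, hM, hmask⟩
    by_contra hn
    push_neg at hn
    rcases Set.eq_empty_or_nonempty 𝔐 with hE | ⟨p₀, hp₀⟩
    · obtain ⟨p, hp, -⟩ := hn 0 0 le_rfl zero_le_one
      simp [hE] at hp
    have hsum : ∀ r ∈ 𝔐, ∑ i, r i = 1 := fun r hr => (hprob r hr).2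
    have hbound : ∀ r ∈ 𝔐, ∀ K : Fin 4, K ≠ 0 → 0 ≤ r 0 + r K ∧ r 0 + r K ≤ 1 := by
      intro r hr K hK
      obtain ⟨hnn, hs⟩ := hprob r hr
      refine ⟨add_nonneg (hnn 0) (hnn K), ?_⟩
      have e : r 0 + r K = ∑ i ∈ ({0, K} : Finset (Fin 4)), r i :=
        (Finset.sum_pair (Ne.symm hK)).symm
      rw [e, ← hs]
      exact Finset.sum_le_sum_of_subset_of_nonneg (Finset.subset_univ _)
        (fun i _ _ => hnn i)
    obtain ⟨q1, hq1, hne1⟩ := hn 0 (p₀ 0 + p₀ 1)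
      (hbound p₀ hp₀ 1 (by decide)).1 (hbound p₀ hp₀ 1 (by decide)).2
    obtain ⟨q2, hq2, hne2⟩ := hn 1 (p₀ 0 + p₀ 2)
      (hbound p₀ hp₀ 2 (by decide)).1 (hbound p₀ hp₀ 2 (by decide)).2
    obtain ⟨q3, hq3, hne3⟩ := hn 2 (p₀ 0 + p₀ 3)
      (hbound p₀ hp₀ 3 (by decide)).1 (hbound p₀ hp₀ 3 (by decide)).2
    have hne1' : q1 0 + q1 1 ≠ p₀ 0 + p₀ 1 := hne1
    have hne2' : q2 0 + q2 2 ≠ p₀ 0 + p₀ 2 := hne2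
    have hne3' : q3 0 + q3 3 ≠ p₀ 0 + p₀ 3 := hne3
    obtain ⟨h1A, h1B⟩ := hmask ρ1 ρ1_psd ρ1_tr q1 hq1 p₀ hp₀
    obtain ⟨h2A, h2B⟩ := hmask ρ2 ρ2_psd ρ2_tr q2 hq2 p₀ hp₀
    obtain ⟨h3A, h3B⟩ := hmask ρ3 ρ3_psd ρ3_tr q3 hq3 p₀ hp₀
    have zx := get_zero M σx _ (sub_ne_zero.mpr (fun h => hne1' (by exact_mod_cast h)))
      _ _ (diff1 q1 p₀ (hsum q1 hq1) (hsum p₀ hp₀)) h1A h1B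
    have zy := get_zero M σy _ (sub_ne_zero.mpr (fun h => hne2' (by exact_mod_cast h)))
      _ _ (diff2 q2 p₀ (hsum q2 hq2) (hsum p₀ hp₀)) h2A h2B
    have zz := get_zero M σz _ (sub_ne_zero.mpr (fun h => hne3' (by exact_mod_cast h)))
      _ _ (diff3 q3 p₀ (hsum q3 hq3) (hsum p₀ hp₀)) h3A h3B
    exact no_masking M hM zx.1 zy.1 zz.2
  · rintro ⟨k, c, hc0, hc1, hconst⟩
    fin_cases k
    · refine ⟨2, 2, Mx, Mx_iso, ?_⟩
      intro ρ _ _ p hp q hq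
      have hd := decomp p q (hprob p hp).2 (hprob q hq).2 ρ
      have e1 : p 0 + p 1 = c := hconst p hp
      have e2 : q 0 + q 1 = c := hconst q hq
      constructor
      · exact mask_outA Mx _ _ _ _ _ hd
          (by rw [e1, e2]; simp) (by rw [Mx_y1]; simp) (by rw [Mx_z1]; simp)
      · exact mask_outB Mx _ _ _ _ _ hd
          (by rw [e1, e2]; simp) (by rw [Mx_y2]; simp) (by rw [Mx_z2]; simp)
    · refine ⟨2, 2, My, My_iso, ?_⟩
      intro ρ _ _ p hp q hq
      have hd := decomp p q (hprob p hp).2 (hprob q hq).2 ρ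
      have e1 : p 0 + p 2 = c := hconst p hp
      have e2 : q 0 + q 2 = c := hconst q hq
      constructor
      · exact mask_outA My _ _ _ _ _ hd
          (by rw [My_x1]; simp) (by rw [e1, e2]; simp) (by rw [My_z1]; simp)
      · exact mask_outB My _ _ _ _ _ hd
          (by rw [My_x2]; simp) (by rw [e1, e2]; simp) (by rw [My_z2]; simp)
    · refine ⟨2, 2, Mz, Mz_iso, ?_⟩
      intro ρ _ _ p hp q hq
      have hd := decomp p q (hprob p hp).2 (hprob q hq).2 ρ
      have e1 : p 0 + p 3 = c := hconst p hp
      have e2 : q 0 + q 3 = c := hconst q hq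
      constructor
      · exact mask_outA Mz _ _ _ _ _ hd
          (by rw [Mz_x1]; simp) (by rw [Mz_y1]; simp) (by rw [e1, e2]; simp)
      · exact mask_outB Mz _ _ _ _ _ hd
          (by rw [Mz_x2]; simp) (by rw [Mz_y2]; simp) (by rw [e1, e2]; simp)
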